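/- In a subcubic graph G with edge weights w, any two distinct problematic triangles of G are vertex-disjoint. -/
import Mathlib


open Finset
open scoped Classical

namespace Paper

variable {V : Type*}

/-- `t` is the vertex set of a triangle (cycle of length 3) of `G`. -/
def IsTriangle (G : SimpleGraph V) (t : Finset V) : Prop :=
  t.card = 3 ∧ ∀ x ∈ t, ∀ y ∈ t, x ≠ y → G.Adj x y

/-- The (three) edges of a triangle with vertex set `t`. -/
def triEdges [DecidableEq V] (t : Finset V) : Finset (Sym2 V) :=
  t.sym2.filter (fun e => ¬ e.IsDiag)

/-- Some connected component of `G` is isomorphic to the complete graph `K₄`: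
there are four pairwise distinct, pairwise adjacent vertices that have no
neighbours outside of these four vertices. -/
def HasK4Component (G : SimpleGraph V) : Prop :=
  ∃ a b c d : V, a ≠ b ∧ a ≠ c ∧ a ≠ d ∧ b ≠ c ∧ b ≠ d ∧ c ≠ d ∧
    G.Adj a b ∧ G.Adj a c ∧ G.Adj a d ∧ G.Adj b c ∧ G.Adj b d ∧ G.Adj c d ∧
    ∀ x y : V, (x = a ∨ x = b ∨ x = c ∨ x = d) → G.Adj x y →
      (y = a ∨ y = b ∨ y = c ∨ y = d)

/-- The degree of the vertex `v` in the edge set `M`, i.e. the number of edges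
of `M` incident to `v`. -/
noncomputable def degIn (M : Finset (Sym2 V)) (v : V) : ℕ :=
  (M.filter (fun e => v ∈ e)).card

/-- `M` is a 2-matching of `G`: a set of edges of `G` such that every vertex is
incident to at most two of its edges. -/
def Is2Matching (G : SimpleGraph V) (M : Finset (Sym2 V)) : Prop :=
  (∀ e ∈ M, e ∈ G.edgeSet) ∧ ∀ v : V, degIn M v ≤ 2

/-- No triangle of `G` has all three of its edges in `M`. -/
def TriangleFree [DecidableEq V] (G : SimpleGraph V) (M : Finset (Sym2 V)) : Prop :=
  ∀ t : Finset V, IsTriangle G t → ¬ triEdges t ⊆ M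

/-- The triangle `t` is unproblematic: some other triangle `t'` shares an edge
with `t` and `w(t) ≤ w(t')`. -/
def TriUnprob [DecidableEq V] (G : SimpleGraph V) (w : Sym2 V → ℝ) (t : Finset V) : Prop :=
  ∃ t' : Finset V, IsTriangle G t' ∧ t' ≠ t ∧ (triEdges t ∩ triEdges t').Nonempty ∧
    ∑ e ∈ triEdges t, w e ≤ ∑ e ∈ triEdges t', w e

/-- The triangle `t` is problematic. -/
def ProblemTri [DecidableEq V] (G : SimpleGraph V) (w : Sym2 V → ℝ) (t : Finset V) : Prop :=
  IsTriangle G t ∧ ¬ TriUnprob G w t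

/-- In a subcubic graph `G` with edge weights `w`, any two
distinct problematic triangles of `G` are vertex-disjoint. -/
theorem problematic_triangles_disjoint {V : Type*} [Fintype V] [DecidableEq V]
    (G : SimpleGraph V) [DecidableRel G.Adj]
    (hsub : ∀ v : V, G.degree v ≤ 3) (w : Sym2 V → ℝ)
    (t₁ t₂ : Finset V) (hp₁ : ProblemTri G w t₁) (hp₂ : ProblemTri G w t₂)
    (hne : t₁ ≠ t₂) :
    Disjoint t₁ t₂ := by
  by_contra hdisj
  obtain ⟨ht₁, hnp₁⟩ := hp₁
  obtain ⟨ht₂, hnp₂⟩ := hp₂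
  rw [Finset.not_disjoint_iff] at hdisj
  obtain ⟨v, hv1, hv2⟩ := hdisj
  by_cases hsh : ∃ u, u ∈ t₁ ∧ u ∈ t₂ ∧ u ≠ v
  · obtain ⟨u, hu1, hu2, huv⟩ := hsh
    have he1 : s(u, v) ∈ triEdges t₁ := by
      simp [triEdges, Finset.mk_mem_sym2_iff, hu1, hv1, Sym2.mk_isDiag_iff, huv]
    have he2 : s(u, v) ∈ triEdges t₂ := by
      simp [triEdges, Finset.mk_mem_sym2_iff, hu2, hv2, Sym2.mk_isDiag_iff, huv]
    rcases le_total (∑ e ∈ triEdges t₁, w e) (∑ e ∈ triEdges t₂, w e) with h | h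
    · exact hnp₁ ⟨t₂, ht₂, hne.symm, ⟨_, Finset.mem_inter.mpr ⟨he1, he2⟩⟩, h⟩
    · exact hnp₂ ⟨t₁, ht₁, hne, ⟨_, Finset.mem_inter.mpr ⟨he2, he1⟩⟩, h⟩
  · push_neg at hsh
    have hca : (t₁.erase v).card = 2 := by
      rw [Finset.card_erase_of_mem hv1, ht₁.1]
    have hcb : (t₂.erase v).card = 2 := by
      rw [Finset.card_erase_of_mem hv2, ht₂.1]
    obtain ⟨a, b, hab, hA⟩ := Finset.card_eq_two.mp hca
    obtain ⟨c, d, hcd, hB⟩ := Finset.card_eq_two.mp hcb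
    have ha : a ∈ t₁.erase v := by rw [hA]; simp
    have hb : b ∈ t₁.erase v := by rw [hA]; simp
    have hc : c ∈ t₂.erase v := by rw [hB]; simp
    have hd : d ∈ t₂.erase v := by rw [hB]; simp
    obtain ⟨hav, ha1⟩ := Finset.mem_erase.mp ha
    obtain ⟨hbv, hb1⟩ := Finset.mem_erase.mp hb
    obtain ⟨hcv, hc2⟩ := Finset.mem_erase.mp hc
    obtain ⟨hdv, hd2⟩ := Finset.mem_erase.mp hd
    have hant2 : a ∉ t₂ := fun h => hav (hsh a ha1 h)
    have hbnt2 : b ∉ t₂ := fun h => hbv (hsh b hb1 h)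
    have hac : a ≠ c := fun h => hant2 (h ▸ hc2)
    have had : a ≠ d := fun h => hant2 (h ▸ hd2)
    have hbc : b ≠ c := fun h => hbnt2 (h ▸ hc2)
    have hbd : b ≠ d := fun h => hbnt2 (h ▸ hd2)
    have hsubn : ({a, b, c, d} : Finset V) ⊆ G.neighborFinset v := by
      intro x hx
      rw [SimpleGraph.mem_neighborFinset]
      simp only [Finset.mem_insert, Finset.mem_singleton] at hx
      rcases hx with rfl | rfl | rfl | rfl
      · exact ht₁.2 v hv1 x ha1 (Ne.symm hav)
      · exact ht₁.2 v hv1 x hb1 (Ne.symm hbv)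
      · exact ht₂.2 v hv2 x hc2 (Ne.symm hcv)
      · exact ht₂.2 v hv2 x hd2 (Ne.symm hdv)
    have hcard : ({a, b, c, d} : Finset V).card = 4 := by
      rw [Finset.card_insert_of_notMem (by simp [hab, hac, had]),
        Finset.card_insert_of_notMem (by simp [hbc, hbd]),
        Finset.card_insert_of_notMem (by simp [hcd]),
        Finset.card_singleton]
    have h4 : 4 ≤ G.degree v := by
      rw [← hcard, SimpleGraph.degree]
      exact Finset.card_le_card hsubn
    have := hsub v
    omega

end Paper
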